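/- If G' is obtained from a simple graph G by local complementation at a vertex v, then G' is connected if and only if G is connected. -/

import Mathlib

/-- The local complement of a simple graph `G` at a vertex `v`: adjacency among pairs of
distinct neighbors of `v` is complemented, all other adjacencies are unchanged. -/
def localComplement {V : Type*} (G : SimpleGraph V) (v : V) : SimpleGraph V where
  Adj x y := x ≠ y ∧
    ((G.Adj v x ∧ G.Adj v y ∧ ¬ G.Adj x y) ∨ (G.Adj x y ∧ ¬ (G.Adj v x ∧ G.Adj v y)))
  symm := ⟨by
    rintro x y ⟨hxy, h⟩
    refine ⟨hxy.symm, ?_⟩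
    rcases h with ⟨h1, h2, h3⟩ | ⟨h1, h2⟩
    · exact Or.inl ⟨h2, h1, fun h => h3 h.symm⟩
    · exact Or.inr ⟨h1.symm, fun h => h2 ⟨h.2, h.1⟩⟩⟩
  loopless := ⟨fun x h => h.1 rfl⟩

private lemma reach_mono {V : Type*} {G H : SimpleGraph V}
    (h : ∀ x y, G.Adj x y → H.Reachable x y) {x y : V} (hr : G.Reachable x y) :
    H.Reachable x y := by
  obtain ⟨w⟩ := hr
  induction w with
  | nil => exact SimpleGraph.Reachable.refl _
  | cons ha _ ih => exact (h _ _ ha).trans ih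

private lemma lc_adj_reach {V : Type*} (G : SimpleGraph V) (v : V) :
    ∀ x y, (localComplement G v).Adj x y → G.Reachable x y := by
  rintro x y ⟨hxy, ⟨h1, h2, _⟩ | ⟨h1, _⟩⟩
  · exact h1.symm.reachable.trans h2.reachable
  · exact h1.reachable

private lemma adj_lc_reach {V : Type*} (G : SimpleGraph V) (v : V) :
    ∀ x y, G.Adj x y → (localComplement G v).Reachable x y := by
  intro x y hxy
  by_cases h : G.Adj v x ∧ G.Adj v y
  · have hxv : (localComplement G v).Adj x v :=
      ⟨(G.ne_of_adj h.1).symm, Or.inr ⟨h.1.symm, fun hc => G.irrefl hc.2⟩⟩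
    have hvy : (localComplement G v).Adj v y :=
      ⟨fun he => G.irrefl (he ▸ h.2), Or.inr ⟨h.2, fun hc => G.irrefl hc.1⟩⟩
    exact hxv.reachable.trans hvy.reachable
  · exact SimpleGraph.Adj.reachable ⟨G.ne_of_adj hxy, Or.inr ⟨hxy, h⟩⟩

/-- If `G'` is obtained from `G` by local complementation at `v`, then `G'` is connected
if and only if `G` is connected. -/
theorem localComplement_connected_iff {V : Type*} (G : SimpleGraph V) (v : V) :
    (localComplement G v).Connected ↔ G.Connected := by
  constructor
  · intro hc; have hne := hc.nonempty; have hpre := hc.preconnected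
    have := hne; exact ⟨fun x y => reach_mono (lc_adj_reach G v) (hpre x y)⟩
  · intro hc; have hne := hc.nonempty; have hpre := hc.preconnected
    have := hne; exact ⟨fun x y => reach_mono (adj_lc_reach G v) (hpre x y)⟩
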